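/- Let ρ > 0 and α ∈ I. The Dirac measure ρδ_α is a stationary solution of the spatially homogeneous Boltzmann-type model, i.e. ∫_I ∫_I (ψ(𝒞(θ⁎, φ⁎)) − ψ(θ⁎)) d(ρδ_α)(θ⁎) d(ρδ_α)(φ⁎) = 0 for every continuous 2π-periodic function ψ : ℝ → ℝ, if and only if α = α_d. -/

import Mathlib

open MeasureTheory Real
open scoped Real

/-- The angular collision-probability profile `𝒢(s) = (1/π)·min{s, 2π−s}`. -/
noncomputable def Gfun (s : ℝ) : ℝ := (1 / π) * min s (2 * π - s)

/-- The collision probability `P(θ⁎, φ⁎) = a·𝒢(|θ⁎ − φ⁎|)`. -/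
noncomputable def Pcoll (a θ φ : ℝ) : ℝ := a * Gfun |θ - φ|

/-- The post-interaction angle
`𝒞(θ⁎, φ⁎) = θ⁎ + (1 − P(θ⁎, φ⁎))(α_d − θ⁎) + P(θ⁎, φ⁎)·α_c`. -/
noncomputable def Cpost (a αd αc θ φ : ℝ) : ℝ :=
  θ + (1 - Pcoll a θ φ) * (αd - θ) + Pcoll a θ φ * αc

lemma Cpost_diag (a αd αc θ : ℝ) : Cpost a αd αc θ θ = αd := by
  have h0 : Pcoll a θ θ = 0 := by
    have : min (0:ℝ) (2 * π - 0) = 0 := min_eq_left (by nlinarith [Real.pi_pos])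
    simp [Pcoll, Gfun, this]
    exact Or.inr Real.pi_pos.le
  simp [Cpost, h0]

/-- The Dirac measure `ρδ_α` is a stationary solution of the spatially homogeneous
Boltzmann-type model if and only if `α = α_d`. -/
theorem stmt_0 (αd αc : ℝ) (hαd : αd ∈ Set.Ico (-π) π) (hαc : αc ∈ Set.Ico (-π) π)
    (ρ a : ℝ) (hρ : 0 < ρ) (hρ1 : ρ ≤ 1) (ha : a ∈ Set.Icc (0 : ℝ) 1)
    (α : ℝ) (hα : α ∈ Set.Ico (-π + αd) (π + αd)) :
    (∀ ψ : ℝ → ℝ, Continuous ψ → (∀ x, ψ (x + 2 * π) = ψ x) →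
      ∫ θ, (∫ φ, (ψ (Cpost a αd αc θ φ) - ψ θ)
          ∂((ENNReal.ofReal ρ) • Measure.dirac α))
        ∂((ENNReal.ofReal ρ) • Measure.dirac α) = 0) ↔ α = αd := by
  have hint : ∀ ψ : ℝ → ℝ,
      ∫ θ, (∫ φ, (ψ (Cpost a αd αc θ φ) - ψ θ)
          ∂((ENNReal.ofReal ρ) • Measure.dirac α))
        ∂((ENNReal.ofReal ρ) • Measure.dirac α)
        = ρ * (ρ * (ψ αd - ψ α)) := by
    intro ψ
    rw [integral_smul_measure, integral_dirac, integral_smul_measure, integral_dirac,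
      Cpost_diag, ENNReal.toReal_ofReal hρ.le, smul_eq_mul, smul_eq_mul]
  constructor
  · intro h
    have := h (fun x => Real.cos (x - αd)) (Real.continuous_cos.comp (continuous_id.sub continuous_const))
      (fun x => by
        have : x + 2 * π - αd = (x - αd) + 2 * π := by ring
        simp [this, Real.cos_add_two_pi])
    have key : ρ * (ρ * (Real.cos (αd - αd) - Real.cos (α - αd))) = 0 :=
      (hint (fun x => Real.cos (x - αd))).symm.trans this
    simp only [sub_self, Real.cos_zero] at key
    have hc : Real.cos (α - αd) = 1 := by
      rcases mul_eq_zero.mp key with h' | h'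
      · exact absurd h' hρ.ne'
      rcases mul_eq_zero.mp h' with h'' | h''
      · exact absurd h'' hρ.ne'
      · linarith
    obtain ⟨n, hn⟩ := Real.cos_eq_one_iff _ |>.mp hc
    have h1 : -π ≤ α - αd := by linarith [hα.1]
    have h2 : α - αd < π := by linarith [hα.2]
    have hπ := Real.pi_pos
    have hn0 : n = 0 := by
      rcases lt_trichotomy n 0 with h | h | h
      · have : (n : ℝ) ≤ -1 := by exact_mod_cast (show n ≤ -1 by omega)
        nlinarith
      · exact h
      · have : (1 : ℝ) ≤ (n : ℝ) := by exact_mod_cast h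
        nlinarith
    rw [hn0] at hn
    simp at hn
    linarith
  · intro h ψ hc hp
    rw [hint, h]
    ring
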